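/- The identity C(d,p) = 2^(d/2-1) with integers d ≥ 4 and 1 ≤ p < d/2 has a unique solution, namely (d,p) = (8,1). -/

import Mathlib

lemma aux_two_pow_gt (k : ℕ) (hk : 4 ≤ k) : 2 * k + 2 < 2 ^ k := by
  induction k with
  | zero => omega
  | succ n ih =>
    rcases Nat.lt_or_ge n 4 with h | h
    · interval_cases n <;> simp_all
    · have := ih h
      have : 2 ^ n ≥ 1 := Nat.one_le_two_pow
      calc 2 * (n + 1) + 2 = (2 * n + 2) + 2 := by ring
        _ < 2 ^ n + 2 ^ n := by omega
        _ = 2 ^ (n + 1) := by ring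

theorem choose_eq_two_pow_unique (d p : ℕ) (hd : 4 ≤ d) (hp : 1 ≤ p) (hpd : 2 * p < d) :
    ((d.choose p : ℝ) = (2 : ℝ) ^ ((d : ℝ) / 2 - 1)) ↔ (d = 8 ∧ p = 1) := by
  constructor
  · intro h
    have hsq : ((d.choose p : ℝ)) ^ 2 = (2 : ℝ) ^ ((d : ℝ) - 2) := by
      rw [h, ← Real.rpow_natCast ((2:ℝ) ^ ((d:ℝ)/2 - 1)) 2, ← Real.rpow_mul (by norm_num)]
      ring_nf
    have hd2 : ((d : ℝ) - 2) = ((d - 2 : ℕ) : ℝ) := by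
      have h2 : (2:ℕ) ≤ d := by omega
      push_cast [Nat.cast_sub h2]; ring
    have hnat : (d.choose p) ^ 2 = 2 ^ (d - 2) := by
      rw [hd2, Real.rpow_natCast] at hsq
      exact_mod_cast hsq
    -- choose is a power of two
    have hdvd : d.choose p ∣ 2 ^ (d - 2) := ⟨d.choose p, by rw [← hnat]; ring⟩
    obtain ⟨k, hk, hck⟩ := (Nat.dvd_prime_pow Nat.prime_two).mp hdvd
    have h2k : 2 * k = d - 2 := by
      have : (2:ℕ) ^ (2 * k) = 2 ^ (d - 2) := by
        rw [← hnat, hck]; ring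
      exact Nat.pow_right_injective (by norm_num) this
    have hdk : d = 2 * k + 2 := by omega
    -- Kummer-type bound
    have hfact : (d.choose p).factorization 2 = k := by
      rw [hck, Nat.Prime.factorization_pow Nat.prime_two]
      simp
    have hble : 2 ^ k ≤ d := by
      have := Nat.pow_factorization_choose_le (p := 2) (n := d) (k := p) (by omega)
      rwa [hfact] at this
    have hk3 : k ≤ 3 := by
      by_contra hc
      have := aux_two_pow_gt k (by omega)
      omega
    have hd8 : d ≤ 8 := by omega
    have hple : p ≤ 3 := by omega
    interval_cases d <;> interval_cases p <;> revert hnat <;> decide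
  · rintro ⟨rfl, rfl⟩
    have h1 : ((8:ℕ) : ℝ) / 2 - 1 = ((3:ℕ) : ℝ) := by norm_num
    rw [h1, Real.rpow_natCast]
    norm_num
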